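/- arXiv:1306.2871 — 2 statements merged into one kernel-verified Lean document; each statement's English description precedes it below -/
import Mathlib

section
/- For every n ≥ 1 and every x ∈ [-1,1]^{n+1}, the family (a(x,k)^2 + b(x,k)^2)_{k ∈ ℕ^{n+1}} is summable and Σ_{k ∈ ℕ^{n+1}} (a(x,k)^2 + b(x,k)^2) = 1. -/
/-- Amplitude factor `f^{(p,q)}`. -/
noncomputable def ampF (p q : ℤ) (x : ℝ) : ℝ :=
  if p < 0 ∨ q < 0 then 0
  else if q = 0 then x ^ p.toNat
  else if p = 0 then 0
  else ∑ j ∈ Finset.Icc 1 (min p q).toNat,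
    (-1 : ℝ) ^ (q.toNat - j) * (p.toNat.choose j : ℝ) * ((q.toNat - 1).choose (j - 1) : ℝ) *
      x ^ (p.toNat + q.toNat - 2 * j) * (1 - x ^ 2) ^ j

/-- Amplitude polynomial `a(x,k)`. -/
noncomputable def ampA (n : ℕ) (x : Fin (n+1) → ℝ) (k : Fin (n+1) → ℕ) : ℝ :=
  (if k 0 = 1 then (1:ℝ) else 0) * x (Fin.last n) ^ k (Fin.last n) *
    ∏ j : Fin n, ampF (k j.castSucc) (k j.succ) (x j.castSucc)
/-- Amplitude factor `g^{(p,q)}`. -/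
noncomputable def ampG (p q : ℤ) (x : ℝ) : ℝ :=
  if p < 0 ∨ q < 0 then 0
  else Real.sqrt (1 - x ^ 2) * ∑ j ∈ Finset.Icc 0 (min p q).toNat,
    (-1 : ℝ) ^ (q.toNat - j) * (p.toNat.choose j : ℝ) * (q.toNat.choose j : ℝ) *
      x ^ (p.toNat + q.toNat - 2 * j) * (1 - x ^ 2) ^ j

/-- Amplitude quasi-polynomial `b(x,k)`. -/
noncomputable def ampB (n : ℕ) (x : Fin (n+1) → ℝ) (k : Fin (n+1) → ℕ) : ℝ :=
  (if k 0 = 0 then (1:ℝ) else 0) * Real.sqrt (1 - x (Fin.last n) ^ 2) *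
    x (Fin.last n) ^ k (Fin.last n) *
    ∏ j : Fin n, ampG (k j.castSucc) (k j.succ) (x j.castSucc)

open Finset

/-- range-indexed version of the f-sum, valid for second index `m+1`. -/
noncomputable def fR (p m : ℕ) (x : ℝ) : ℝ :=
  ∑ i ∈ range (m+1),
    (-1 : ℝ) ^ (m - i) * (p.choose (i+1) : ℝ) * (m.choose i : ℝ) *
      x ^ (p + m - (2*i + 1)) * (1 - x ^ 2) ^ (i+1)

/-- range-indexed version of the g-sum. -/
noncomputable def gR (p m : ℕ) (x : ℝ) : ℝ :=
  ∑ i ∈ range (m+1),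
    (-1 : ℝ) ^ (m - i) * (p.choose i : ℝ) * (m.choose i : ℝ) *
      x ^ (p + m - 2*i) * (1 - x ^ 2) ^ i

lemma ampF_nat (p q : ℕ) (x : ℝ) : ampF p q x =
    if q = 0 then x ^ p else if p = 0 then 0 else
    ∑ j ∈ Finset.Icc 1 (min p q),
      (-1 : ℝ) ^ (q - j) * (p.choose j : ℝ) * ((q - 1).choose (j - 1) : ℝ) *
        x ^ (p + q - 2 * j) * (1 - x ^ 2) ^ j := by
  have h : ¬ ((p:ℤ) < 0 ∨ (q:ℤ) < 0) := by push_neg; exact ⟨Int.natCast_nonneg p, Int.natCast_nonneg q⟩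
  rw [ampF, if_neg h]
  have hmin : (min (p:ℤ) (q:ℤ)).toNat = min p q := by
    rw [← Nat.cast_min, Int.toNat_natCast]
  simp [hmin, Int.toNat_natCast]

lemma ampG_nat (p q : ℕ) (x : ℝ) : ampG p q x =
    Real.sqrt (1 - x ^ 2) * ∑ j ∈ Finset.Icc 0 (min p q),
      (-1 : ℝ) ^ (q - j) * (p.choose j : ℝ) * (q.choose j : ℝ) *
        x ^ (p + q - 2 * j) * (1 - x ^ 2) ^ j := by
  have h : ¬ ((p:ℤ) < 0 ∨ (q:ℤ) < 0) := by push_neg; exact ⟨Int.natCast_nonneg p, Int.natCast_nonneg q⟩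
  rw [ampG, if_neg h]
  have hmin : (min (p:ℤ) (q:ℤ)).toNat = min p q := by
    rw [← Nat.cast_min, Int.toNat_natCast]
  simp [hmin, Int.toNat_natCast]

lemma ampG_neg (p : ℤ) {q : ℤ} (hq : q < 0) (x : ℝ) : ampG p q x = 0 := by
  rw [ampG, if_pos (Or.inr hq)]

lemma ampF_q0 (p : ℕ) (x : ℝ) : ampF p 0 x = x ^ p := by
  rw [show ((0:ℤ) = ((0:ℕ):ℤ)) by norm_num, ampF_nat]; simp

lemma ampF_zero_left (q : ℕ) (x : ℝ) : ampF 0 q x = if q = 0 then 1 else 0 := by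
  rw [show ((0:ℤ) = ((0:ℕ):ℤ)) by norm_num, ampF_nat]
  by_cases h : q = 0 <;> simp [h]

lemma ampF_succ (p m : ℕ) (x : ℝ) : ampF p (m+1 : ℕ) x = fR p m x := by
  rw [ampF_nat]
  rcases Nat.eq_zero_or_pos p with hp | hp
  · subst hp
    rw [if_neg (Nat.succ_ne_zero m), if_pos rfl, eq_comm, fR, Finset.sum_eq_zero]
    intro i _
    simp [Nat.choose_eq_zero_of_lt (Nat.succ_pos i)]
  · rw [if_neg (Nat.succ_ne_zero m), if_neg (Nat.pos_iff_ne_zero.mp hp)]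
    rw [Finset.sum_subset (Finset.Icc_subset_Icc_right (min_le_right p (m+1)))
      (by intro j hj hj2
          simp only [Finset.mem_Icc] at hj hj2
          have : p < j := by omega
          simp [Nat.choose_eq_zero_of_lt this])]
    rw [← Finset.Ico_add_one_right_eq_Icc, Finset.sum_Ico_eq_sum_range]
    apply Finset.sum_congr (by norm_num)
    intro i hi
    have h1 : 1 + i = i + 1 := by omega
    have e1 : m + 1 - (i + 1) = m - i := by omega
    have e2 : p + (m + 1) - 2 * (i + 1) = p + m - (2 * i + 1) := by omega
    rw [h1, e1, e2, Nat.add_sub_cancel, Nat.add_sub_cancel]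

lemma ampG_eq (p m : ℕ) (x : ℝ) : ampG p m x = Real.sqrt (1 - x ^ 2) * gR p m x := by
  rw [ampG_nat]
  congr 1
  rw [Finset.sum_subset (Finset.Icc_subset_Icc_right (min_le_right p m))
    (by intro j hj hj2
        simp only [Finset.mem_Icc] at hj hj2
        have : p < j := by omega
        simp [Nat.choose_eq_zero_of_lt this])]
  rw [show Finset.Icc 0 m = Finset.range (m+1) by ext j; simp [Nat.lt_succ_iff]]
  rfl

/-- Key recurrence S1 (Pascal on the first index). -/
lemma fR_succ_left (p m : ℕ) (x : ℝ) :
    fR (p+1) m x = x * fR p m x + (1 - x ^ 2) * gR p m x := by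
  rw [fR, fR, gR, Finset.mul_sum, Finset.mul_sum, ← Finset.sum_add_distrib]
  apply Finset.sum_congr rfl
  intro i hi
  simp only [Finset.mem_range] at hi
  have him : i ≤ m := by omega
  have hP : ((p+1).choose (i+1) : ℝ) = p.choose i + p.choose (i+1) := by
    rw [Nat.choose_succ_succ]; push_cast; ring
  have e0 : p + 1 + m - (2*i + 1) = p + m - 2*i := by omega
  rcases Nat.lt_or_ge i p with hip | hip
  · have e1 : p + m - (2*i+1) + 1 = p + m - 2*i := by omega
    rw [e0, hP, ← e1, pow_succ]
    ring
  · have hc : p.choose (i+1) = 0 := Nat.choose_eq_zero_of_lt (by omega)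
    rw [e0, hP, hc]
    push_cast
    ring

/-- Key recurrence S2' (Pascal on the second index). -/
lemma gR_succ_right (p m : ℕ) (x : ℝ) :
    gR p (m+1) x = fR p m x - x * gR p m x := by
  have hsplit : ∀ i ∈ Finset.range (m+1),
      (-1 : ℝ) ^ (m + 1 - (i+1)) * (p.choose (i+1) : ℝ) * ((m+1).choose (i+1) : ℝ) *
        x ^ (p + (m+1) - 2*(i+1)) * (1 - x ^ 2) ^ (i+1)
      = (-1 : ℝ) ^ (m - i) * (p.choose (i+1) : ℝ) * (m.choose i : ℝ) *
          x ^ (p + m - (2*i + 1)) * (1 - x ^ 2) ^ (i+1)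
        + (-1 : ℝ) ^ (m - i) * (p.choose (i+1) : ℝ) * (m.choose (i+1) : ℝ) *
          x ^ (p + m - (2*i + 1)) * (1 - x ^ 2) ^ (i+1) := by
    intro i hi
    have e1 : m + 1 - (i + 1) = m - i := by omega
    have e2 : p + (m+1) - 2*(i+1) = p + m - (2*i + 1) := by omega
    rw [e1, e2, Nat.choose_succ_succ (m) (i)]
    push_cast
    ring
  rw [gR, Finset.sum_range_succ']
  rw [Finset.sum_congr rfl hsplit, Finset.sum_add_distrib]
  have hlast : (-1 : ℝ) ^ (m + 1 - (m+1)) * (p.choose (m+1) : ℝ) * (m.choose (m+1) : ℝ) *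
      x ^ (p + (m+1) - 2*(m+1)) * (1 - x ^ 2) ^ (m+1) = 0 := by
    simp [Nat.choose_succ_self]
  have h2 : ∑ i ∈ Finset.range (m+1),
      (-1 : ℝ) ^ (m - i) * (p.choose (i+1) : ℝ) * (m.choose (i+1) : ℝ) *
        x ^ (p + m - (2*i + 1)) * (1 - x ^ 2) ^ (i+1)
      + (-1 : ℝ) ^ (m + 1 - 0) * (p.choose 0 : ℝ) * ((m+1).choose 0 : ℝ) *
        x ^ (p + (m+1) - 2 * 0) * (1 - x ^ 2) ^ 0
      = - (x * gR p m x) := by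
    rw [gR, Finset.mul_sum, ← Finset.sum_neg_distrib]
    rw [Finset.sum_range_succ' (fun i => -(x * ((-1 : ℝ) ^ (m - i) * (p.choose i : ℝ) *
      (m.choose i : ℝ) * x ^ (p + m - 2*i) * (1 - x ^ 2) ^ i)))]
    congr 1
    · rw [Finset.sum_range_succ]
      rw [show ((m.choose (m+1) : ℝ)) = 0 by simp [Nat.choose_succ_self], mul_zero]
      simp only [mul_zero, zero_mul, add_zero]
      apply Finset.sum_congr rfl
      intro i hi
      simp only [Finset.mem_range] at hi
      have e1 : m - (i+1) + 1 = m - i := by omega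
      rcases Nat.lt_or_ge (i+1) (p+1) with hip | hip
      · have e2 : p + m - 2*(i+1) + 1 = p + m - (2*i+1) := by omega
        rw [← e1, ← e2, pow_succ, pow_succ]
        ring
      · have hc : p.choose (i+1) = 0 := Nat.choose_eq_zero_of_lt (by omega)
        rw [hc]
        push_cast
        ring
    · have e3 : p + m - 2*0 = p + m := by omega
      have e4 : p + (m+1) - 2*0 = (p + m) + 1 := by omega
      rw [e3, e4]
      simp [pow_succ]
      ring
  rw [add_assoc, h2, fR]
  ring

lemma ampG_sub_one (q : ℕ) : ((q+1 : ℕ) : ℤ) - 1 = (q : ℤ) := by push_cast; ring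

lemma gR_zero (p : ℕ) (x : ℝ) : gR p 0 x = x ^ p := by simp [gR]

lemma ampG_zero_right (p : ℕ) (x : ℝ) :
    ampG p (0:ℤ) x = Real.sqrt (1 - x ^ 2) * x ^ p := by
  rw [show ((0:ℤ)) = ((0:ℕ):ℤ) by norm_num, ampG_eq, gR_zero]

/-- Rotation recurrence R2. -/
lemma recur_R2 (p q : ℕ) (x : ℝ) :
    ampG p q x = Real.sqrt (1 - x ^ 2) * ampF p q x - x * ampG p ((q : ℤ) - 1) x := by
  cases q with
  | zero =>
    simp only [Nat.cast_zero]
    rw [ampG_zero_right, ampF_q0, show ((0:ℤ)) - 1 = -1 by norm_num,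
      ampG_neg _ (by norm_num)]
    ring
  | succ m =>
    rw [ampG_eq, ampG_sub_one, ampG_eq, ampF_succ, gR_succ_right]
    ring

/-- Rotation recurrence R1. -/
lemma recur_R1 (p q : ℕ) (x : ℝ) (hx : x ^ 2 ≤ 1) :
    ampF ((p+1 : ℕ)) q x = x * ampF p q x + Real.sqrt (1 - x ^ 2) * ampG p ((q : ℤ) - 1) x := by
  have hs : Real.sqrt (1 - x ^ 2) * Real.sqrt (1 - x ^ 2) = 1 - x ^ 2 :=
    Real.mul_self_sqrt (by linarith)
  cases q with
  | zero =>
    simp only [Nat.cast_zero]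
    rw [ampF_q0, ampF_q0, show ((0:ℤ)) - 1 = -1 by norm_num, ampG_neg _ (by norm_num)]
    ring
  | succ m =>
    rw [ampF_succ, ampF_succ, ampG_sub_one, ampG_eq, fR_succ_left]
    linear_combination (-(gR p m x)) * hs

/-- The key energy identity (⋆). -/
lemma star (p q : ℕ) (x : ℝ) (hx : x ^ 2 ≤ 1) :
    ampF ((p+1:ℕ)) q x ^ 2 + ampG p q x ^ 2
      = ampF p q x ^ 2 + ampG p ((q : ℤ) - 1) x ^ 2 := by
  have hs : Real.sqrt (1 - x ^ 2) ^ 2 = 1 - x ^ 2 := Real.sq_sqrt (by linarith)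
  rw [recur_R1 p q x hx, recur_R2 p q x]
  linear_combination (ampF p q x ^ 2 + ampG p ((q:ℤ) - 1) x ^ 2) * hs

/-- Partial sums of `f²` along a row are at most 1. -/
lemma sumF_le_one (p : ℕ) (x : ℝ) (hx : x ^ 2 ≤ 1) :
    ∀ Q : ℕ, ∑ q ∈ Finset.range Q, ampF p q x ^ 2 ≤ 1 := by
  induction p with
  | zero =>
    intro Q
    have : ∀ q : ℕ, ampF (0:ℕ) q x ^ 2 = if q = 0 then 1 else 0 := by
      intro q
      rw [show (((0:ℕ)):ℤ) = (0:ℤ) by norm_num, ampF_zero_left]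
      by_cases h : q = 0 <;> simp [h]
    calc ∑ q ∈ Finset.range Q, ampF (0:ℕ) q x ^ 2
        = ∑ q ∈ Finset.range Q, if q = 0 then (1:ℝ) else 0 := by
          exact Finset.sum_congr rfl fun q _ => this q
      _ ≤ 1 := by rw [Finset.sum_ite_eq' (Finset.range Q) 0 (fun _ => (1:ℝ))]; split_ifs <;> norm_num
  | succ p ih =>
    intro Q
    cases Q with
    | zero => simp
    | succ Q =>
      have tel : ∑ q ∈ Finset.range (Q+1), ampF ((p+1:ℕ)) q x ^ 2
          + ∑ q ∈ Finset.range (Q+1), ampG p q x ^ 2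
          = ∑ q ∈ Finset.range (Q+1), ampF p q x ^ 2
          + ∑ q ∈ Finset.range (Q+1), ampG p ((q:ℤ) - 1) x ^ 2 := by
        rw [← Finset.sum_add_distrib, ← Finset.sum_add_distrib]
        exact Finset.sum_congr rfl fun q _ => star p q x hx
      have shift : ∑ q ∈ Finset.range (Q+1), ampG p ((q:ℤ) - 1) x ^ 2
          = ∑ q ∈ Finset.range Q, ampG p q x ^ 2 := by
        rw [Finset.sum_range_succ' (fun q => ampG p ((q:ℤ) - 1) x ^ 2)]
        rw [show ((0:ℕ):ℤ) - 1 = -1 by norm_num, ampG_neg _ (by norm_num)]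
        simp only [ne_eq, OfNat.ofNat_ne_zero, not_false_eq_true, zero_pow, add_zero]
        exact Finset.sum_congr rfl fun q _ => by rw [ampG_sub_one]
      have last : ∑ q ∈ Finset.range (Q+1), ampG p q x ^ 2
          = ∑ q ∈ Finset.range Q, ampG p q x ^ 2 + ampG p Q x ^ 2 :=
        Finset.sum_range_succ _ _
      have hF := ih (Q+1)
      nlinarith [sq_nonneg (ampG p Q x)]

/-- Convolution form of `g`. -/
lemma ampG_conv (p : ℕ) (x : ℝ) : ∀ q : ℕ,
    ampG p q x = Real.sqrt (1 - x ^ 2) *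
      ∑ i ∈ Finset.range (q+1), (-x) ^ (q - i) * ampF p i x := by
  intro q
  induction q with
  | zero =>
    simp only [Nat.cast_zero, zero_add, Finset.range_one, Finset.sum_singleton,
      Nat.sub_zero, pow_zero, one_mul]
    rw [ampG_zero_right, ampF_q0]
  | succ m ih =>
    rw [recur_R2 p (m+1) x, ampG_sub_one, ih]
    have key : ∀ i ∈ Finset.range (m+1), Real.sqrt (1-x^2) * ((-x) ^ (m+1-i) * ampF p i x)
        = -(x * (Real.sqrt (1-x^2) * ((-x) ^ (m-i) * ampF p i x))) := by
      intro i hi; simp only [Finset.mem_range] at hi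
      rw [show m+1-i = (m-i)+1 by omega, pow_succ]; ring
    conv_rhs => rw [Finset.mul_sum, Finset.sum_range_succ, Finset.sum_congr rfl key]
    rw [Finset.sum_neg_distrib, ← Finset.mul_sum, ← Finset.mul_sum]
    simp only [Nat.sub_self, pow_zero, one_mul]
    ring

open ENNReal in
/-- Lemma B : the row sums of `g²` are finite. -/
lemma tsumG_ne_top (p : ℕ) (x : ℝ) (hx : x ^ 2 ≤ 1) :
    ∑' q : ℕ, ENNReal.ofReal (ampG p q x ^ 2) ≠ ⊤ := by
  rcases eq_or_lt_of_le hx with h1 | h1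
  · have : ∀ q : ℕ, ampG p q x = 0 := by
      intro q
      rw [ampG_eq, show (1 - x^2) = 0 by linarith, Real.sqrt_zero, zero_mul]
    simp [this]
  · have hr : |x| < 1 := (sq_lt_one_iff_abs_lt_one x).mp h1
    have hr0 : (0:ℝ) ≤ |x| := abs_nonneg x
    set r : ℝ := |x| with hrdef
    have hA0 : (0:ℝ) < 1 - r := by linarith
    set A : ℝ := (1 - r)⁻¹ with hAdef
    have hA0' : (0:ℝ) ≤ A := le_of_lt (by positivity)
    have hA : ∀ m : ℕ, ∑ k ∈ Finset.range m, r ^ k ≤ A := by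
      intro m
      have hgeo := geom_sum_mul r m
      have hrm : (0:ℝ) ≤ r ^ m := pow_nonneg hr0 m
      have hmul : (∑ k ∈ Finset.range m, r ^ k) * (1 - r) = 1 - r ^ m := by
        nlinarith [hgeo]
      rw [hAdef, inv_eq_one_div, le_div_iff₀ hA0, hmul]
      linarith
    -- pointwise Cauchy-Schwarz bound
    have hx2 : (0:ℝ) ≤ 1 - x^2 := by linarith
    have hCS : ∀ q : ℕ, ampG p q x ^ 2
        ≤ ((1-x^2) * A) * ∑ i ∈ Finset.range (q+1), r^(q-i) * ampF p i x ^ 2 := by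
      intro q
      have hT0 : (0:ℝ) ≤ ∑ i ∈ Finset.range (q+1), r^(q-i) * ampF p i x ^ 2 :=
        Finset.sum_nonneg fun i _ => mul_nonneg (pow_nonneg hr0 _) (sq_nonneg _)
      rw [ampG_conv p x q, mul_pow, Real.sq_sqrt hx2, mul_assoc]
      apply mul_le_mul_of_nonneg_left _ hx2
      -- S² ≤ A * T
      have habs : |∑ i ∈ Finset.range (q+1), (-x)^(q-i) * ampF p i x|
          ≤ ∑ i ∈ Finset.range (q+1), r^(q-i) * |ampF p i x| := by
        refine (Finset.abs_sum_le_sum_abs _ _).trans ?_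
        apply Finset.sum_le_sum
        intro i _
        rw [abs_mul, abs_pow, abs_neg]
      have hU0 : (0:ℝ) ≤ ∑ i ∈ Finset.range (q+1), r^(q-i) * |ampF p i x| :=
        Finset.sum_nonneg fun i _ => mul_nonneg (pow_nonneg hr0 _) (abs_nonneg _)
      have hCS2 : (∑ i ∈ Finset.range (q+1), r^(q-i) * |ampF p i x|) ^ 2
          ≤ (∑ i ∈ Finset.range (q+1), r^(q-i))
            * ∑ i ∈ Finset.range (q+1), r^(q-i) * ampF p i x ^ 2 := by
        have := Finset.sum_mul_sq_le_sq_mul_sq (Finset.range (q+1))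
          (fun i => Real.sqrt (r^(q-i))) (fun i => Real.sqrt (r^(q-i)) * |ampF p i x|)
        calc (∑ i ∈ Finset.range (q+1), r^(q-i) * |ampF p i x|) ^ 2
            = (∑ i ∈ Finset.range (q+1),
                Real.sqrt (r^(q-i)) * (Real.sqrt (r^(q-i)) * |ampF p i x|)) ^ 2 := by
              congr 1
              refine Finset.sum_congr rfl fun i _ => ?_
              rw [← mul_assoc, Real.mul_self_sqrt (pow_nonneg hr0 _)]
          _ ≤ (∑ i ∈ Finset.range (q+1), Real.sqrt (r^(q-i)) ^ 2)
              * ∑ i ∈ Finset.range (q+1), (Real.sqrt (r^(q-i)) * |ampF p i x|) ^ 2 := this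
          _ = (∑ i ∈ Finset.range (q+1), r^(q-i))
              * ∑ i ∈ Finset.range (q+1), r^(q-i) * ampF p i x ^ 2 := by
              congr 1
              · exact Finset.sum_congr rfl fun i _ => Real.sq_sqrt (pow_nonneg hr0 _)
              · refine Finset.sum_congr rfl fun i _ => ?_
                rw [mul_pow, Real.sq_sqrt (pow_nonneg hr0 _), sq_abs]
      have hgeo' : ∑ i ∈ Finset.range (q+1), r^(q-i) ≤ A := by
        calc ∑ i ∈ Finset.range (q+1), r^(q-i)
            = ∑ i ∈ Finset.range (q+1), r^(q+1-1-i) := by norm_num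
          _ = ∑ i ∈ Finset.range (q+1), r^i := Finset.sum_range_reflect (fun i => r^i) (q+1)
          _ ≤ A := hA (q+1)
      calc (∑ i ∈ Finset.range (q+1), (-x)^(q-i) * ampF p i x) ^ 2
          = |∑ i ∈ Finset.range (q+1), (-x)^(q-i) * ampF p i x| ^ 2 := (sq_abs _).symm
        _ ≤ (∑ i ∈ Finset.range (q+1), r^(q-i) * |ampF p i x|) ^ 2 :=
            pow_le_pow_left₀ (abs_nonneg _) habs 2
        _ ≤ (∑ i ∈ Finset.range (q+1), r^(q-i))
            * ∑ i ∈ Finset.range (q+1), r^(q-i) * ampF p i x ^ 2 := hCS2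
        _ ≤ A * ∑ i ∈ Finset.range (q+1), r^(q-i) * ampF p i x ^ 2 :=
            mul_le_mul_of_nonneg_right hgeo' hT0
    -- now push to ENNReal
    set F2 : ℕ → ℝ≥0∞ := fun i => ENNReal.ofReal (ampF p i x ^ 2) with hF2
    have hFsum : ∑' i : ℕ, F2 i ≤ 1 := by
      rw [← ENNReal.ofReal_one]
      apply ENNReal.tsum_le_of_sum_range_le
      intro n
      rw [← ENNReal.ofReal_sum_of_nonneg (fun i _ => sq_nonneg _)]
      exact ENNReal.ofReal_le_ofReal (sumF_le_one p x hx n)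
    set r' : ℝ≥0∞ := ENNReal.ofReal r with hr'
    have hrlt : r' < 1 := ENNReal.ofReal_lt_one.mpr hr
    have hRGne : ∑' k : ℕ, r' ^ k ≠ ⊤ := by
      rw [ENNReal.tsum_geometric]
      refine ENNReal.inv_ne_top.mpr ?_
      rw [ne_eq, tsub_eq_zero_iff_le]
      exact fun h => absurd (lt_of_lt_of_le hrlt h) (lt_irrefl _)
    set u : ℕ → ℕ → ℝ≥0∞ := fun q i =>
      if i ≤ q then ENNReal.ofReal (r^(q-i) * ampF p i x ^ 2) else 0 with hu
    have step1 : ∑' q : ℕ, ENNReal.ofReal (ampG p q x ^ 2)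
        ≤ ENNReal.ofReal ((1-x^2) * A) * ∑' q : ℕ, ∑' i : ℕ, u q i := by
      rw [← ENNReal.tsum_mul_left]
      apply ENNReal.tsum_le_tsum
      intro q
      refine (ENNReal.ofReal_le_ofReal (hCS q)).trans ?_
      rw [ENNReal.ofReal_mul (mul_nonneg hx2 hA0')]
      apply mul_le_mul_of_nonneg_left _ zero_le
      rw [ENNReal.ofReal_sum_of_nonneg
        (fun i _ => mul_nonneg (pow_nonneg hr0 _) (sq_nonneg _))]
      rw [show ∑ i ∈ Finset.range (q+1), ENNReal.ofReal (r^(q-i) * ampF p i x ^ 2)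
          = ∑ i ∈ Finset.range (q+1), u q i from Finset.sum_congr rfl fun i hi => by
            simp only [Finset.mem_range] at hi
            rw [hu]; simp only [if_pos (by omega : i ≤ q)]]
      exact le_of_eq (tsum_eq_sum (fun i hi => by
        simp only [Finset.mem_range] at hi
        rw [hu]; simp only [if_neg (by omega : ¬ i ≤ q)])).symm
    have step2 : ∑' q : ℕ, ∑' i : ℕ, u q i ≤ (∑' k : ℕ, r' ^ k) := by
      rw [ENNReal.tsum_comm]
      have inner : ∀ i : ℕ, ∑' q : ℕ, u q i = (∑' k : ℕ, r' ^ k) * F2 i := by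
        intro i
        have hinj : Function.Injective (fun k : ℕ => i + k) := fun a b h => by simpa using h
        rw [← Function.Injective.tsum_eq hinj (f := fun q => u q i) ?_]
        · rw [← ENNReal.tsum_mul_right]
          apply tsum_congr
          intro k
          simp only [hu, if_pos (Nat.le_add_right i k), Nat.add_sub_cancel_left]
          rw [ENNReal.ofReal_mul (pow_nonneg hr0 _), hr', ← ENNReal.ofReal_pow hr0]
        · intro q hq
          by_contra hc
          have hni : ¬ i ≤ q := fun hle =>
            hc (Set.mem_range.mpr ⟨q - i, by show i + (q - i) = q; omega⟩)
          exact hq (by simp only [hu, if_neg hni])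
      calc ∑' i : ℕ, ∑' q : ℕ, u q i = ∑' i : ℕ, (∑' k : ℕ, r' ^ k) * F2 i :=
            tsum_congr inner
        _ = (∑' k : ℕ, r' ^ k) * ∑' i : ℕ, F2 i := ENNReal.tsum_mul_left
        _ ≤ (∑' k : ℕ, r' ^ k) * 1 := mul_le_mul_of_nonneg_left hFsum zero_le
        _ = (∑' k : ℕ, r' ^ k) := mul_one _
    refine ne_top_of_le_ne_top ?_ (step1.trans (mul_le_mul_of_nonneg_left step2 zero_le))
    exact ENNReal.mul_ne_top ENNReal.ofReal_ne_top hRGne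

open ENNReal

/-- Iterated f²-chain sum. -/
noncomputable def Psi : (n : ℕ) → (Fin (n+1) → ℝ) → ℕ → ℝ≥0∞
  | 0, x, p => ENNReal.ofReal (x 0 ^ 2) ^ p
  | n+1, x, p => ∑' q : ℕ, ENNReal.ofReal (ampF p q (x 0) ^ 2) * Psi n (fun j => x j.succ) q

/-- Iterated g²-chain sum. -/
noncomputable def Chi : (n : ℕ) → (Fin (n+1) → ℝ) → ℕ → ℝ≥0∞
  | 0, x, p => ENNReal.ofReal (1 - x 0 ^ 2) * ENNReal.ofReal (x 0 ^ 2) ^ p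
  | n+1, x, p => ∑' q : ℕ, ENNReal.ofReal (ampG p q (x 0) ^ 2) * Chi n (fun j => x j.succ) q

lemma Psi_zero : ∀ (n : ℕ) (x : Fin (n+1) → ℝ), Psi n x 0 = 1 := by
  intro n
  induction n with
  | zero => intro x; simp [Psi]
  | succ n ih =>
    intro x
    rw [Psi]
    have hfun : (fun q : ℕ => ENNReal.ofReal (ampF (0:ℕ) q (x 0) ^ 2)
        * Psi n (fun j => x j.succ) q)
        = fun q : ℕ => if q = 0 then Psi n (fun j => x j.succ) 0 else 0 := by
      funext q
      cases q with
      | zero =>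
        simp only [Nat.cast_zero, if_pos rfl]
        rw [show ampF 0 0 (x 0) = 1 by simp [ampF]]
        norm_num
      | succ m =>
        simp only [if_neg (Nat.succ_ne_zero m)]
        rw [show ampF ((0:ℕ):ℤ) (m+1 : ℕ) (x 0) = 0 by
          simp only [ampF]
          rw [if_neg (by push_neg; constructor <;> positivity), if_neg (by
            push_cast; omega), if_pos (by norm_num)]]
        norm_num
    rw [hfun, tsum_ite_eq 0 (fun _ => Psi n (fun j => x j.succ) 0), ih]

/-- helper: shifted tsum with vanishing head. -/
lemma tsum_shift (u : ℕ → ℝ≥0∞) (h0 : u 0 = 0) : ∑' q : ℕ, u (q+1) = ∑' q : ℕ, u q := by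
  apply Function.Injective.tsum_eq (fun a b h => by simpa using h : Function.Injective Nat.succ)
  intro q hq
  cases q with
  | zero => exact absurd h0 hq
  | succ m => exact ⟨m, rfl⟩

/-- The invariant: `Ψ(p+1) + Χ(p) = Ψ(p)`. -/
lemma Psi_Chi (n : ℕ) : ∀ (x : Fin (n+1) → ℝ), (∀ j, x j ∈ Set.Icc (-1:ℝ) 1) →
    ∀ p : ℕ, Psi n x (p+1) + Chi n x p = Psi n x p := by
  induction n with
  | zero =>
    intro x hx p
    rw [Psi, Chi, Psi]
    have hx2 : x 0 ^ 2 ≤ 1 := by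
      rcases hx 0 with ⟨h1, h2⟩
      nlinarith
    rw [pow_succ, mul_comm (ENNReal.ofReal (x 0 ^ 2) ^ p), ← add_mul]
    rw [← ENNReal.ofReal_add (sq_nonneg _) (by linarith : (0:ℝ) ≤ 1 - x 0 ^ 2)]
    norm_num
  | succ n ih =>
    intro x hx p
    set x' : Fin (n+1) → ℝ := fun j => x j.succ with hx'def
    have hx' : ∀ j, x' j ∈ Set.Icc (-1:ℝ) 1 := fun j => hx j.succ
    have hx0 : x 0 ^ 2 ≤ 1 := by rcases hx 0 with ⟨h1, h2⟩; nlinarith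
    set Ψ : ℕ → ℝ≥0∞ := Psi n x' with hΨ
    set Χ : ℕ → ℝ≥0∞ := Chi n x' with hΧ
    have IH : ∀ q, Ψ (q+1) + Χ q = Ψ q := ih x' hx'
    have hΨ1 : ∀ q, Ψ q ≤ 1 := by
      intro q
      induction q with
      | zero => rw [hΨ, Psi_zero]
      | succ m ihm => calc Ψ (m+1) ≤ Ψ (m+1) + Χ m := le_self_add
                        _ = Ψ m := IH m
                        _ ≤ 1 := ihm
    set F : ℕ → ℝ≥0∞ := fun q => ENNReal.ofReal (ampF p q (x 0) ^ 2) with hF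
    set F' : ℕ → ℝ≥0∞ := fun q => ENNReal.ofReal (ampF (p+1:ℕ) q (x 0) ^ 2) with hF'
    set G : ℕ → ℝ≥0∞ := fun q => ENNReal.ofReal (ampG p q (x 0) ^ 2) with hG
    set Gm : ℕ → ℝ≥0∞ := fun q => ENNReal.ofReal (ampG p ((q:ℤ)-1) (x 0) ^ 2) with hGm
    have hGm0 : Gm 0 = 0 := by
      rw [hGm]
      simp only [Nat.cast_zero]
      rw [show ((0:ℤ)) - 1 = -1 by norm_num, ampG_neg _ (by norm_num)]
      norm_num
    have hGmsucc : ∀ q : ℕ, Gm (q+1) = G q := by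
      intro q
      rw [hGm, hG]
      simp only [ampG_sub_one]
    have hstar : ∀ q : ℕ, F' q + G q = F q + Gm q := by
      intro q
      rw [hF, hF', hG, hGm, ← ENNReal.ofReal_add (sq_nonneg _) (sq_nonneg _),
        ← ENNReal.ofReal_add (sq_nonneg _) (sq_nonneg _), star p q (x 0) hx0]
    -- finiteness of the correction term
    have hDne : (∑' q : ℕ, Gm q * Ψ (q+1)) ≠ ⊤ := by
      refine ne_top_of_le_ne_top (tsumG_ne_top p (x 0) hx0) ?_
      calc ∑' q : ℕ, Gm q * Ψ (q+1) ≤ ∑' q : ℕ, Gm q := by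
            apply ENNReal.tsum_le_tsum
            intro q
            calc Gm q * Ψ (q+1) ≤ Gm q * 1 :=
                  mul_le_mul_of_nonneg_left (hΨ1 _) zero_le
              _ = Gm q := mul_one _
        _ = ∑' q : ℕ, G q := by
            rw [← tsum_shift Gm hGm0]
            exact tsum_congr hGmsucc
    -- the two sides
    rw [show Psi (n+1) x (p+1) = ∑' q : ℕ, F' q * Ψ q from rfl,
        show Psi (n+1) x p = ∑' q : ℕ, F q * Ψ q from rfl,
        show Chi (n+1) x p = ∑' q : ℕ, G q * Χ q from rfl]
    have expand : ∀ (H : ℕ → ℝ≥0∞), ∑' q, H q * Ψ q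
        = ∑' q, H q * Χ q + ∑' q, H q * Ψ (q+1) := by
      intro H
      rw [← ENNReal.tsum_add]
      apply tsum_congr
      intro q
      rw [← IH q]
      ring
    rw [expand F', expand F]
    -- key sub-identity (**)
    have key : ∑' q, Gm q * Χ q + ∑' q, F' q * Ψ (q+1) = ∑' q, F q * Ψ (q+1) := by
      have hcalc : (∑' q, Gm q * Χ q + ∑' q, F' q * Ψ (q+1)) + ∑' q, Gm q * Ψ (q+1)
          = (∑' q, F q * Ψ (q+1)) + ∑' q, Gm q * Ψ (q+1) := by
        calc (∑' q, Gm q * Χ q + ∑' q, F' q * Ψ (q+1)) + ∑' q, Gm q * Ψ (q+1)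
            = (∑' q, Gm q * Χ q + ∑' q, Gm q * Ψ (q+1)) + ∑' q, F' q * Ψ (q+1) := by ring
          _ = (∑' q, Gm q * Ψ q) + ∑' q, F' q * Ψ (q+1) := by
              congr 1
              rw [← ENNReal.tsum_add]
              apply tsum_congr
              intro q
              rw [← IH q]
              ring
          _ = (∑' q, G q * Ψ (q+1)) + ∑' q, F' q * Ψ (q+1) := by
              congr 1
              rw [← tsum_shift (fun q => Gm q * Ψ q)
                (by show Gm 0 * Ψ 0 = 0; rw [hGm0, zero_mul])]
              exact tsum_congr fun q => by rw [hGmsucc]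
          _ = ∑' q, (F' q + G q) * Ψ (q+1) := by
              rw [← ENNReal.tsum_add]
              apply tsum_congr
              intro q
              ring
          _ = ∑' q, (F q + Gm q) * Ψ (q+1) := tsum_congr fun q => by rw [hstar]
          _ = (∑' q, F q * Ψ (q+1)) + ∑' q, Gm q * Ψ (q+1) := by
              rw [← ENNReal.tsum_add]
              apply tsum_congr
              intro q
              ring
      exact (ENNReal.add_left_inj hDne).mp hcalc
    calc (∑' q, F' q * Χ q + ∑' q, F' q * Ψ (q+1)) + ∑' q, G q * Χ q
        = (∑' q, (F' q + G q) * Χ q) + ∑' q, F' q * Ψ (q+1) := by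
          rw [show (∑' q, (F' q + G q) * Χ q) = ∑' q, (F' q * Χ q + G q * Χ q) from
            tsum_congr (fun q => by ring), ENNReal.tsum_add]
          ring
      _ = (∑' q, (F q + Gm q) * Χ q) + ∑' q, F' q * Ψ (q+1) := by
          congr 1
          exact tsum_congr fun q => by rw [hstar]
      _ = (∑' q, F q * Χ q) + (∑' q, Gm q * Χ q + ∑' q, F' q * Ψ (q+1)) := by
          rw [show (∑' q, (F q + Gm q) * Χ q) = ∑' q, (F q * Χ q + Gm q * Χ q) from
            tsum_congr (fun q => by ring), ENNReal.tsum_add]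
          ring
      _ = (∑' q, F q * Χ q) + ∑' q, F q * Ψ (q+1) := by rw [key]

noncomputable def ampA' (n : ℕ) (x : Fin (n+1) → ℝ) (k : Fin (n+1) → ℕ) : ℝ :=
  x (Fin.last n) ^ k (Fin.last n) *
    ∏ j : Fin n, ampF (k j.castSucc) (k j.succ) (x j.castSucc)

noncomputable def ampB' (n : ℕ) (x : Fin (n+1) → ℝ) (k : Fin (n+1) → ℕ) : ℝ :=
  Real.sqrt (1 - x (Fin.last n) ^ 2) * x (Fin.last n) ^ k (Fin.last n) *
    ∏ j : Fin n, ampG (k j.castSucc) (k j.succ) (x j.castSucc)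

/-- tsum over functions on `Fin (n+1)` splits as head/tail. -/
lemma tsum_cons_decomp (n : ℕ) (h : (Fin (n+1) → ℕ) → ℝ≥0∞) :
    ∑' k : Fin (n+1) → ℕ, h k = ∑' q : ℕ, ∑' t : Fin n → ℕ, h (Fin.cons q t) := by
  rw [← Equiv.tsum_eq (Fin.consEquiv (fun _ : Fin (n+1) => ℕ)) h, ← ENNReal.tsum_prod]
  rfl

lemma tsum_fiber_zero (n : ℕ) (h : (Fin (n+1) → ℕ) → ℝ≥0∞) (q : ℕ) :
    ∑' k : Fin (n+1) → ℕ, (if k 0 = q then h k else 0)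
      = ∑' t : Fin n → ℕ, h (Fin.cons q t) := by
  rw [tsum_cons_decomp n (fun k => if k 0 = q then h k else 0)]
  have heq : ∀ q' : ℕ, (∑' t : Fin n → ℕ, if (Fin.cons q' t : Fin (n+1) → ℕ) 0 = q
      then h (Fin.cons q' t) else 0)
      = if q' = q then (∑' t : Fin n → ℕ, h (Fin.cons q t)) else 0 := by
    intro q'
    by_cases hq : q' = q
    · subst hq
      simp only [Fin.cons_zero, if_pos rfl]
      simp
    · simp only [Fin.cons_zero, hq, if_false]
      simp
  rw [tsum_congr heq, tsum_ite_eq q (fun _ => ∑' t : Fin n → ℕ, h (Fin.cons q t))]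

lemma ampA'_cons (n : ℕ) (x : Fin (n+2) → ℝ) (p : ℕ) (k : Fin (n+1) → ℕ) :
    ampA' (n+1) x (Fin.cons p k) = ampF p (k 0) (x 0) * ampA' n (fun j => x j.succ) k := by
  simp only [ampA', Fin.prod_univ_succ, ← Fin.succ_last, Fin.cons_succ, ← Fin.succ_castSucc,
    Fin.castSucc_zero, Fin.cons_zero]
  ring

lemma ampB'_cons (n : ℕ) (x : Fin (n+2) → ℝ) (p : ℕ) (k : Fin (n+1) → ℕ) :
    ampB' (n+1) x (Fin.cons p k) = ampG p (k 0) (x 0) * ampB' n (fun j => x j.succ) k := by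
  simp only [ampB', Fin.prod_univ_succ, ← Fin.succ_last, Fin.cons_succ, ← Fin.succ_castSucc,
    Fin.castSucc_zero, Fin.cons_zero]
  ring

lemma tsum_fin_zero_unique (g : (Fin 0 → ℕ) → ℝ≥0∞) :
    ∑' t : Fin 0 → ℕ, g t = g default :=
  tsum_eq_single default fun b hb => absurd (Subsingleton.elim b default) hb

lemma PhiA (n : ℕ) : ∀ (x : Fin (n+1) → ℝ) (p : ℕ),
    ∑' k : Fin (n+1) → ℕ, (if k 0 = p then ENNReal.ofReal (ampA' n x k ^ 2) else 0)
      = Psi n x p := by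
  induction n with
  | zero =>
    intro x p
    rw [tsum_fiber_zero 0 _ p, tsum_fin_zero_unique]
    have : ampA' 0 x (Fin.cons p default) = x 0 ^ p := by
      simp [ampA', Fin.last]
    rw [this, Psi, ← pow_right_comm, ENNReal.ofReal_pow (sq_nonneg _)]
  | succ n ih =>
    intro x p
    rw [tsum_fiber_zero (n+1) _ p]
    calc ∑' t : Fin (n+1) → ℕ, ENNReal.ofReal (ampA' (n+1) x (Fin.cons p t) ^ 2)
        = ∑' t : Fin (n+1) → ℕ, ENNReal.ofReal (ampF p (t 0) (x 0) ^ 2)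
            * ENNReal.ofReal (ampA' n (fun j => x j.succ) t ^ 2) := by
          apply tsum_congr
          intro t
          rw [ampA'_cons, mul_pow, ENNReal.ofReal_mul (sq_nonneg _)]
      _ = ∑' q : ℕ, ∑' t' : Fin n → ℕ, ENNReal.ofReal (ampF p ((Fin.cons q t' : Fin (n+1) → ℕ) 0) (x 0) ^ 2)
            * ENNReal.ofReal (ampA' n (fun j => x j.succ) (Fin.cons q t') ^ 2) :=
          tsum_cons_decomp n _
      _ = ∑' q : ℕ, ENNReal.ofReal (ampF p q (x 0) ^ 2)
            * ∑' t' : Fin n → ℕ, ENNReal.ofReal (ampA' n (fun j => x j.succ) (Fin.cons q t') ^ 2) := by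
          apply tsum_congr
          intro q
          rw [← ENNReal.tsum_mul_left]
          exact tsum_congr fun t' => by rw [Fin.cons_zero]
      _ = ∑' q : ℕ, ENNReal.ofReal (ampF p q (x 0) ^ 2) * Psi n (fun j => x j.succ) q := by
          apply tsum_congr
          intro q
          congr 1
          rw [← tsum_fiber_zero n
            (fun k => ENNReal.ofReal (ampA' n (fun j => x j.succ) k ^ 2)) q]
          exact ih _ q
      _ = Psi (n+1) x p := rfl

lemma PhiB (n : ℕ) : ∀ (x : Fin (n+1) → ℝ), (∀ j, x j ∈ Set.Icc (-1:ℝ) 1) → ∀ (p : ℕ),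
    ∑' k : Fin (n+1) → ℕ, (if k 0 = p then ENNReal.ofReal (ampB' n x k ^ 2) else 0)
      = Chi n x p := by
  induction n with
  | zero =>
    intro x hx p
    rw [tsum_fiber_zero 0 _ p, tsum_fin_zero_unique]
    have hx2 : x 0 ^ 2 ≤ 1 := by rcases hx 0 with ⟨h1, h2⟩; nlinarith
    have : ampB' 0 x (Fin.cons p default) = Real.sqrt (1 - x 0 ^ 2) * x 0 ^ p := by
      simp [ampB', Fin.last]
    rw [this, Chi, mul_pow, Real.sq_sqrt (by linarith : (0:ℝ) ≤ 1 - x 0 ^ 2),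
      ENNReal.ofReal_mul (by linarith : (0:ℝ) ≤ 1 - x 0 ^ 2), ← pow_right_comm,
      ENNReal.ofReal_pow (sq_nonneg _)]
  | succ n ih =>
    intro x hx p
    rw [tsum_fiber_zero (n+1) _ p]
    calc ∑' t : Fin (n+1) → ℕ, ENNReal.ofReal (ampB' (n+1) x (Fin.cons p t) ^ 2)
        = ∑' t : Fin (n+1) → ℕ, ENNReal.ofReal (ampG p (t 0) (x 0) ^ 2)
            * ENNReal.ofReal (ampB' n (fun j => x j.succ) t ^ 2) := by
          apply tsum_congr
          intro t
          rw [ampB'_cons, mul_pow, ENNReal.ofReal_mul (sq_nonneg _)]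
      _ = ∑' q : ℕ, ∑' t' : Fin n → ℕ, ENNReal.ofReal (ampG p ((Fin.cons q t' : Fin (n+1) → ℕ) 0) (x 0) ^ 2)
            * ENNReal.ofReal (ampB' n (fun j => x j.succ) (Fin.cons q t') ^ 2) :=
          tsum_cons_decomp n _
      _ = ∑' q : ℕ, ENNReal.ofReal (ampG p q (x 0) ^ 2)
            * ∑' t' : Fin n → ℕ, ENNReal.ofReal (ampB' n (fun j => x j.succ) (Fin.cons q t') ^ 2) := by
          apply tsum_congr
          intro q
          rw [← ENNReal.tsum_mul_left]
          exact tsum_congr fun t' => by rw [Fin.cons_zero]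
      _ = ∑' q : ℕ, ENNReal.ofReal (ampG p q (x 0) ^ 2) * Chi n (fun j => x j.succ) q := by
          apply tsum_congr
          intro q
          congr 1
          rw [← tsum_fiber_zero n
            (fun k => ENNReal.ofReal (ampB' n (fun j => x j.succ) k ^ 2)) q]
          exact ih (fun j => x j.succ) (fun j => hx j.succ) q
      _ = Chi (n+1) x p := rfl

/-- conservation of energy — the squared reflection and transmission
    amplitudes sum to 1. -/
theorem conservation_of_energy (n : ℕ) (hn : 1 ≤ n) (x : Fin (n+1) → ℝ)
    (hx : ∀ j, x j ∈ Set.Icc (-1 : ℝ) 1) :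
    HasSum (fun k : Fin (n+1) → ℕ => ampA n x k ^ 2 + ampB n x k ^ 2) 1 := by
  have hA : ∀ k, ampA n x k = (if k 0 = 1 then (1:ℝ) else 0) * ampA' n x k := by
    intro k; rw [ampA, ampA']; ring
  have hB : ∀ k, ampB n x k = (if k 0 = 0 then (1:ℝ) else 0) * ampB' n x k := by
    intro k; rw [ampB, ampB']; ring
  set a : (Fin (n+1) → ℕ) → ℝ := fun k => ampA n x k ^ 2 + ampB n x k ^ 2 with hadef
  have ha : ∀ k, 0 ≤ a k := fun k => add_nonneg (sq_nonneg _) (sq_nonneg _)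
  have htotA : ∑' k : Fin (n+1) → ℕ, ENNReal.ofReal (ampA n x k ^ 2) = Psi n x 1 := by
    rw [← PhiA n x 1]
    apply tsum_congr
    intro k
    rw [hA k]
    by_cases h : k 0 = 1
    · rw [if_pos h, if_pos h, one_mul]
    · rw [if_neg h, if_neg h, zero_mul]
      norm_num
  have htotB : ∑' k : Fin (n+1) → ℕ, ENNReal.ofReal (ampB n x k ^ 2) = Chi n x 0 := by
    rw [← PhiB n x hx 0]
    apply tsum_congr
    intro k
    rw [hB k]
    by_cases h : k 0 = 0
    · rw [if_pos h, if_pos h, one_mul]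
    · rw [if_neg h, if_neg h, zero_mul]
      norm_num
  have key : ∑' k : Fin (n+1) → ℕ, ENNReal.ofReal (a k) = 1 := by
    calc ∑' k : Fin (n+1) → ℕ, ENNReal.ofReal (a k)
        = ∑' k : Fin (n+1) → ℕ,
            (ENNReal.ofReal (ampA n x k ^ 2) + ENNReal.ofReal (ampB n x k ^ 2)) :=
          tsum_congr fun k => ENNReal.ofReal_add (sq_nonneg _) (sq_nonneg _)
      _ = (∑' k : Fin (n+1) → ℕ, ENNReal.ofReal (ampA n x k ^ 2))
          + ∑' k : Fin (n+1) → ℕ, ENNReal.ofReal (ampB n x k ^ 2) := ENNReal.tsum_add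
      _ = Psi n x 1 + Chi n x 0 := by rw [htotA, htotB]
      _ = Psi n x 0 := Psi_Chi n x hx 0
      _ = 1 := Psi_zero n x
  set g : (Fin (n+1) → ℕ) → NNReal := fun k => (a k).toNNReal with hgdef
  have h1 : ∑' k, (g k : ℝ≥0∞) = 1 := key
  have hs : Summable g := ENNReal.tsum_coe_ne_top_iff_summable.mp (by
    rw [h1]; exact ENNReal.one_ne_top)
  have h3 : ∑' k, g k = 1 := by
    have h2 : ((∑' k, g k : NNReal) : ℝ≥0∞) = ((1:NNReal) : ℝ≥0∞) := by
      rw [ENNReal.coe_tsum hs, h1]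
      norm_num
    exact_mod_cast h2
  have hsum : HasSum g 1 := h3 ▸ hs.hasSum
  have hcoe : HasSum (fun k => (g k : ℝ)) 1 := by
    have := NNReal.hasSum_coe.mpr hsum
    simpa using this
  have : (fun k => ((g k : ℝ))) = a := funext fun k => Real.coe_toNNReal _ (ha k)
  rw [this] at hcoe
  exact hcoe
end

section
/- (Seven points formula.) Fix integers n ≥ 2 and 1 ≤ j ≤ n-1. Define lattice points k^0,…,k^6 ∈ ℕ^{n+1} (coordinates indexed 0,…,n, e^i the i-th standard basis vector) by: k^0_i = 1 for 0 ≤ i ≤ j+1 and k^0_i = 0 for i > j+1; k^1 = k^0 + e^j + e^{j+1}; k^2 = k^0 + 2e^j + 2e^{j+1}; k^3 = k^0 + e^{j+1}; k^4 = k^0 + e^j; k^5 = k^0 + e^j + 2e^{j+1}; k^6 = k^0 + 2e^j + 3e^{j+1}. Let x ∈ [-1,1]^{n+1} and write ã_r = a(x, k^r) for r = 0,…,6. Set y_± = -7ã_1/(5ã_0) ± √( 3ã_1ã_3ã_4/ã_0^3 + (7ã_1/(5ã_0))^2 - 9ã_2/(5ã_0) ) and Y_± = -5ã_5/(4ã_3)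 ± √( 5ã_4ã_5/(2ã_0^2) + (5ã_5/(4ã_3))^2 - 4ã_6/(3ã_3) ), with √ the real square root. If ã_0 ã_3 ≠ 0 and 7ã_1/(5ã_0) ≠ 5ã_5/(4ã_3), then the intersection {y_+, y_-} ∩ {Y_+, Y_-} consists of exactly one element y, and moreover x_j = -(ã_3/|ã_3|)·√( ã_3ã_4/(2ã_0^2 y) ). -/
/-- `i`-th standard basis vector of `ℕ^{n+1}`. -/
def evec (n : ℕ) (i : Fin (n+1)) : Fin (n+1) → ℕ := fun i' => if i' = i then 1 else 0

section lemmas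

lemma ampF_nat_zero (q : ℕ) (x : ℝ) : ampF q 0 x = x ^ q := by
  simp [ampF]

lemma tn1 : (1:ℤ).toNat = 1 := rfl
lemma tn2 : (2:ℤ).toNat = 2 := rfl
lemma tn3 : (3:ℤ).toNat = 3 := rfl
lemma tn4 : (4:ℤ).toNat = 4 := rfl

lemma ampF_11 (x : ℝ) : ampF 1 1 x = 1 - x ^ 2 := by
  norm_num [ampF, show ((min (1:ℤ) 1).toNat) = 1 from rfl, tn1, Finset.Icc_self,
    Finset.sum_singleton]

lemma ampF_12 (x : ℝ) : ampF 1 2 x = -(x * (1 - x ^ 2)) := by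
  norm_num [ampF, show ((min (1:ℤ) 2).toNat) = 1 from rfl, tn1, tn2]

lemma ampF_13 (x : ℝ) : ampF 1 3 x = x ^ 2 * (1 - x ^ 2) := by
  norm_num [ampF, show ((min (1:ℤ) 3).toNat) = 1 from rfl, tn1, tn3]

lemma ampF_21 (x : ℝ) : ampF 2 1 x = 2 * x * (1 - x ^ 2) := by
  norm_num [ampF, show ((min (2:ℤ) 1).toNat) = 1 from rfl, tn1, tn2]

lemma ampF_22 (x : ℝ) : ampF 2 2 x = (1 - x ^ 2) * (1 - 3 * x ^ 2) := by
  norm_num [ampF, show ((min (2:ℤ) 2).toNat) = 2 from rfl, tn2,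
    Finset.sum_Icc_succ_top, Finset.Icc_self, Finset.sum_singleton]; ring

lemma ampF_23 (x : ℝ) : ampF 2 3 x = 2 * x * (1 - x ^ 2) * (2 * x ^ 2 - 1) := by
  norm_num [ampF, show ((min (2:ℤ) 3).toNat) = 2 from rfl, tn2, tn3,
    Finset.sum_Icc_succ_top, Finset.Icc_self, Finset.sum_singleton]; ring

lemma ampF_33 (x : ℝ) : ampF 3 3 x = (1 - x ^ 2) * (10 * x ^ 4 - 8 * x ^ 2 + 1) := by
  norm_num [ampF, show ((min (3:ℤ) 3).toNat) = 3 from rfl, tn3,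
    Finset.sum_Icc_succ_top, Finset.Icc_self, Finset.sum_singleton]; ring

lemma ampF_34 (x : ℝ) : ampF 3 4 x = -(3 * x * (1 - x ^ 2) * (5 * x ^ 4 - 5 * x ^ 2 + 1)) := by
  norm_num [ampF, show ((min (3:ℤ) 4).toNat) = 3 from rfl, tn3, tn4,
    Finset.sum_Icc_succ_top, Finset.Icc_self, Finset.sum_singleton]; ring

lemma ampA_eval (n J p q : ℕ) (hj1 : 1 ≤ J) (hjn : J + 1 ≤ n)
    (x : Fin (n+1) → ℝ) (k : Fin (n+1) → ℕ) (X : ℕ → ℝ)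
    (hX : ∀ i : Fin (n+1), x i = X i.val)
    (hk : ∀ i : Fin (n+1), k i = if (i:ℕ) < J then 1
      else if (i:ℕ) = J then p else if (i:ℕ) = J + 1 then q else 0) :
    ampA n x k = (∏ i ∈ Finset.range (J-1), (1 - X i ^ 2)) *
      ampF 1 p (X (J-1)) * ampF p q (X J) * X (J+1) ^ q := by
  set K : ℕ → ℕ := fun m => if m < J then 1 else if m = J then p
    else if m = J + 1 then q else 0 with hK
  have hkK : ∀ i : Fin (n+1), k i = K i.val := hk
  rw [ampA]
  have h0 : k 0 = 1 := by
    rw [hkK]; simp only [Fin.val_zero, hK]; rw [if_pos (by omega)]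
  rw [h0, if_pos rfl, one_mul]
  have hprod : (∏ i : Fin n, ampF (k i.castSucc) (k i.succ) (x i.castSucc)) =
      ∏ m ∈ Finset.range n, ampF (K m) (K (m+1)) (X m) := by
    rw [← Fin.prod_univ_eq_prod_range (fun m => ampF (K m) (K (m+1)) (X m)) n]
    apply Finset.prod_congr rfl
    intro i _
    rw [hkK, hkK, hX]
    simp [Fin.coe_castSucc, Fin.val_succ]
  rw [hprod]
  have hpt : ∀ m ∈ Finset.range n, ampF (K m) (K (m+1)) (X m) =
      (if m < J - 1 then (1 - X m ^ 2) else 1) *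
      ((if m = J - 1 then ampF 1 p (X (J-1)) else 1) *
      ((if m = J then ampF p q (X J) else 1) *
      (if m = J + 1 then X (J+1) ^ q else 1))) := by
    intro m _
    rcases lt_trichotomy m (J-1) with h | h | h
    · have h1 : K m = 1 := by simp only [hK]; rw [if_pos (by omega)]
      have h2 : K (m+1) = 1 := by simp only [hK]; rw [if_pos (by omega)]
      rw [h1, h2, if_pos h, if_neg (by omega), if_neg (by omega), if_neg (by omega)]
      push_cast
      rw [ampF_11]; ring
    · have h1 : K m = 1 := by simp only [hK]; rw [if_pos (by omega)]
      have h2 : K (m+1) = p := by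
        simp only [hK]; rw [if_neg (by omega), if_pos (by omega)]
      rw [h1, h2, if_neg (by omega), if_pos h, if_neg (by omega), if_neg (by omega), h]
      push_cast; ring
    · rcases Nat.lt_or_ge m J with h' | h'
      · omega
      rcases Nat.eq_or_lt_of_le h' with h' | h'
      · have h1 : K m = p := by simp only [hK]; rw [if_neg (by omega), if_pos (by omega)]
        have h2 : K (m+1) = q := by
          simp only [hK]; rw [if_neg (by omega), if_neg (by omega), if_pos (by omega)]
        rw [h1, h2, if_neg (by omega), if_neg (by omega), if_pos (by omega),
          if_neg (by omega), ← h']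
        push_cast; ring
      rcases Nat.eq_or_lt_of_le h' with h'' | h''
      · have h1 : K m = q := by
          simp only [hK]; rw [if_neg (by omega), if_neg (by omega), if_pos (by omega)]
        have h2 : K (m+1) = 0 := by
          simp only [hK]; rw [if_neg (by omega), if_neg (by omega), if_neg (by omega)]
        rw [h1, h2, if_neg (by omega), if_neg (by omega), if_neg (by omega), if_pos (by omega)]
        push_cast
        rw [ampF_nat_zero, show J + 1 = m by omega]; ring
      · have h1 : K m = 0 := by
          simp only [hK]; rw [if_neg (by omega), if_neg (by omega), if_neg (by omega)]
        have h2 : K (m+1) = 0 := by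
          simp only [hK]; rw [if_neg (by omega), if_neg (by omega), if_neg (by omega)]
        rw [h1, h2, if_neg (by omega), if_neg (by omega), if_neg (by omega), if_neg (by omega)]
        norm_num [ampF]
  rw [Finset.prod_congr rfl hpt]
  rw [Finset.prod_mul_distrib, Finset.prod_mul_distrib, Finset.prod_mul_distrib]
  have e1 : (∏ m ∈ Finset.range n, if m < J - 1 then (1 - X m ^ 2) else 1) =
      ∏ i ∈ Finset.range (J-1), (1 - X i ^ 2) := by
    rw [← Finset.prod_range_mul_prod_Ico (fun m => if m < J - 1 then (1 - X m ^ 2) else 1)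
      (show J - 1 ≤ n by omega)]
    rw [Finset.prod_congr rfl (fun i hi => if_pos (Finset.mem_range.mp hi)),
      Finset.prod_congr rfl (fun i hi => if_neg (by
        have := (Finset.mem_Ico.mp hi).1; omega)), Finset.prod_const_one, mul_one]
  have e2 : (∏ m ∈ Finset.range n, if m = J - 1 then ampF 1 p (X (J-1)) else 1) =
      ampF 1 p (X (J-1)) := by
    rw [Finset.prod_ite_eq' (Finset.range n) (J-1) (fun _ => ampF 1 p (X (J-1))),
      if_pos (Finset.mem_range.mpr (by omega))]
  have e3 : (∏ m ∈ Finset.range n, if m = J then ampF p q (X J) else 1) =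
      ampF p q (X J) := by
    rw [Finset.prod_ite_eq' (Finset.range n) J (fun _ => ampF p q (X J)),
      if_pos (Finset.mem_range.mpr (by omega))]
  have e4 : (∏ m ∈ Finset.range n, if m = J + 1 then X (J+1) ^ q else 1) =
      if J + 1 ∈ Finset.range n then X (J+1) ^ q else 1 :=
    Finset.prod_ite_eq' (Finset.range n) (J+1) (fun _ => X (J+1) ^ q)
  rw [e1, e2, e3, e4]
  have etail : x (Fin.last n) ^ k (Fin.last n) = X n ^ K n := by
    rw [hX, hkK]; rfl
  rw [etail]
  rcases eq_or_lt_of_le hjn with h | h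
  · have hKn : K n = q := by
      simp only [hK]; rw [if_neg (by omega), if_neg (by omega), if_pos (by omega)]
    rw [hKn, if_neg (by simp [Finset.mem_range]; omega), ← h]
    ring
  · have hKn : K n = 0 := by
      simp only [hK]; rw [if_neg (by omega), if_neg (by omega), if_neg (by omega)]
    rw [hKn, if_pos (Finset.mem_range.mpr h)]
    ring

end lemmas

set_option maxHeartbeats 2000000

/-- Seven points formula: unique determination of the reflection
    coefficient `x_j` from seven amplitudes. -/
theorem seven_points (n j : ℕ) (hn : 2 ≤ n) (hj1 : 1 ≤ j) (hj2 : j ≤ n - 1)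
    (k0 k1 k2 k3 k4 k5 k6 : Fin (n+1) → ℕ)
    (hk0 : ∀ i : Fin (n+1), k0 i = if (i : ℕ) ≤ j + 1 then 1 else 0)
    (h1 : k1 = k0 + evec n ⟨j, by omega⟩ + evec n ⟨j + 1, by omega⟩)
    (h2 : k2 = k0 + 2 • evec n ⟨j, by omega⟩ + 2 • evec n ⟨j + 1, by omega⟩)
    (h3 : k3 = k0 + evec n ⟨j + 1, by omega⟩)
    (h4 : k4 = k0 + evec n ⟨j, by omega⟩)
    (h5 : k5 = k0 + evec n ⟨j, by omega⟩ + 2 • evec n ⟨j + 1, by omega⟩)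
    (h6 : k6 = k0 + 2 • evec n ⟨j, by omega⟩ + 3 • evec n ⟨j + 1, by omega⟩)
    (x : Fin (n+1) → ℝ) (hx : ∀ i, x i ∈ Set.Icc (-1 : ℝ) 1) :
    let a0 := ampA n x k0
    let a1 := ampA n x k1
    let a2 := ampA n x k2
    let a3 := ampA n x k3
    let a4 := ampA n x k4
    let a5 := ampA n x k5
    let a6 := ampA n x k6
    let yp : ℝ := -(7 * a1) / (5 * a0) +
      Real.sqrt (3 * (a1 * a3 * a4) / a0 ^ 3 + (7 * a1 / (5 * a0)) ^ 2 - 9 * a2 / (5 * a0))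
    let ym : ℝ := -(7 * a1) / (5 * a0) -
      Real.sqrt (3 * (a1 * a3 * a4) / a0 ^ 3 + (7 * a1 / (5 * a0)) ^ 2 - 9 * a2 / (5 * a0))
    let Yp : ℝ := -(5 * a5) / (4 * a3) +
      Real.sqrt (5 * (a4 * a5) / (2 * a0 ^ 2) + (5 * a5 / (4 * a3)) ^ 2 - 4 * a6 / (3 * a3))
    let Ym : ℝ := -(5 * a5) / (4 * a3) -
      Real.sqrt (5 * (a4 * a5) / (2 * a0 ^ 2) + (5 * a5 / (4 * a3)) ^ 2 - 4 * a6 / (3 * a3))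
    a0 * a3 ≠ 0 → 7 * a1 / (5 * a0) ≠ 5 * a5 / (4 * a3) →
      ∃ y : ℝ, ({yp, ym} ∩ {Yp, Ym} : Set ℝ) = {y} ∧
        x ⟨j, by omega⟩ = -(a3 / |a3|) * Real.sqrt (a3 * a4 / (2 * a0 ^ 2 * y)) := by
  intro a0 a1 a2 a3 a4 a5 a6 yp ym Yp Ym h03 hne
  have hj2' : j + 1 ≤ n := by omega
  set X : ℕ → ℝ := fun m => if h : m < n + 1 then x ⟨m, h⟩ else 0 with hXdef
  have hX : ∀ i : Fin (n+1), x i = X i.val := by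
    intro i
    simp only [hXdef]
    rw [dif_pos i.isLt]
  -- patterns
  have hpat0 : ∀ i : Fin (n+1), k0 i = if (i:ℕ) < j then 1
      else if (i:ℕ) = j then 1 else if (i:ℕ) = j + 1 then 1 else 0 := by
    intro i; rw [hk0]; split_ifs <;> omega
  have hpat1 : ∀ i : Fin (n+1), k1 i = if (i:ℕ) < j then 1
      else if (i:ℕ) = j then 2 else if (i:ℕ) = j + 1 then 2 else 0 := by
    intro i; rw [h1]
    simp only [Pi.add_apply, evec, hk0, Fin.ext_iff]
    split_ifs <;> omega
  have hpat2 : ∀ i : Fin (n+1), k2 i = if (i:ℕ) < j then 1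
      else if (i:ℕ) = j then 3 else if (i:ℕ) = j + 1 then 3 else 0 := by
    intro i; rw [h2]
    simp only [Pi.add_apply, Pi.smul_apply, smul_eq_mul, evec, hk0, Fin.ext_iff]
    split_ifs <;> omega
  have hpat3 : ∀ i : Fin (n+1), k3 i = if (i:ℕ) < j then 1
      else if (i:ℕ) = j then 1 else if (i:ℕ) = j + 1 then 2 else 0 := by
    intro i; rw [h3]
    simp only [Pi.add_apply, evec, hk0, Fin.ext_iff]
    split_ifs <;> omega
  have hpat4 : ∀ i : Fin (n+1), k4 i = if (i:ℕ) < j then 1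
      else if (i:ℕ) = j then 2 else if (i:ℕ) = j + 1 then 1 else 0 := by
    intro i; rw [h4]
    simp only [Pi.add_apply, evec, hk0, Fin.ext_iff]
    split_ifs <;> omega
  have hpat5 : ∀ i : Fin (n+1), k5 i = if (i:ℕ) < j then 1
      else if (i:ℕ) = j then 2 else if (i:ℕ) = j + 1 then 3 else 0 := by
    intro i; rw [h5]
    simp only [Pi.add_apply, Pi.smul_apply, smul_eq_mul, evec, hk0, Fin.ext_iff]
    split_ifs <;> omega
  have hpat6 : ∀ i : Fin (n+1), k6 i = if (i:ℕ) < j then 1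
      else if (i:ℕ) = j then 3 else if (i:ℕ) = j + 1 then 4 else 0 := by
    intro i; rw [h6]
    simp only [Pi.add_apply, Pi.smul_apply, smul_eq_mul, evec, hk0, Fin.ext_iff]
    split_ifs <;> omega
  -- amplitude values
  have ha0 : a0 = (∏ i ∈ Finset.range (j-1), (1 - X i ^ 2)) *
      (1 - X (j-1) ^ 2) * ((1 - X j ^ 2)) * X (j+1) := by
    show ampA n x k0 = _
    rw [ampA_eval n j 1 1 hj1 hj2' x k0 X hX hpat0]
    simp only [Nat.cast_one]
    rw [ampF_11, ampF_11, pow_one]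
  have ha1 : a1 = (∏ i ∈ Finset.range (j-1), (1 - X i ^ 2)) *
      (-(X (j-1) * (1 - X (j-1) ^ 2))) * ((1 - X j ^ 2) * (1 - 3 * X j ^ 2)) * X (j+1) ^ 2 := by
    show ampA n x k1 = _
    rw [ampA_eval n j 2 2 hj1 hj2' x k1 X hX hpat1]
    simp only [Nat.cast_ofNat]
    rw [ampF_12, ampF_22]
  have ha2 : a2 = (∏ i ∈ Finset.range (j-1), (1 - X i ^ 2)) *
      (X (j-1) ^ 2 * (1 - X (j-1) ^ 2)) *
      ((1 - X j ^ 2) * (10 * X j ^ 4 - 8 * X j ^ 2 + 1)) * X (j+1) ^ 3 := by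
    show ampA n x k2 = _
    rw [ampA_eval n j 3 3 hj1 hj2' x k2 X hX hpat2]
    simp only [Nat.cast_ofNat]
    rw [ampF_13, ampF_33]
  have ha3 : a3 = (∏ i ∈ Finset.range (j-1), (1 - X i ^ 2)) *
      (1 - X (j-1) ^ 2) * (-(X j * (1 - X j ^ 2))) * X (j+1) ^ 2 := by
    show ampA n x k3 = _
    rw [ampA_eval n j 1 2 hj1 hj2' x k3 X hX hpat3]
    simp only [Nat.cast_ofNat, Nat.cast_one]
    rw [ampF_11, ampF_12]
  have ha4 : a4 = (∏ i ∈ Finset.range (j-1), (1 - X i ^ 2)) *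
      (-(X (j-1) * (1 - X (j-1) ^ 2))) * (2 * X j * (1 - X j ^ 2)) * X (j+1) := by
    show ampA n x k4 = _
    rw [ampA_eval n j 2 1 hj1 hj2' x k4 X hX hpat4]
    simp only [Nat.cast_ofNat, Nat.cast_one]
    rw [ampF_12, ampF_21, pow_one]
  have ha5 : a5 = (∏ i ∈ Finset.range (j-1), (1 - X i ^ 2)) *
      (-(X (j-1) * (1 - X (j-1) ^ 2))) *
      (2 * X j * (1 - X j ^ 2) * (2 * X j ^ 2 - 1)) * X (j+1) ^ 3 := by
    show ampA n x k5 = _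
    rw [ampA_eval n j 2 3 hj1 hj2' x k5 X hX hpat5]
    simp only [Nat.cast_ofNat]
    rw [ampF_12, ampF_23]
  have ha6 : a6 = (∏ i ∈ Finset.range (j-1), (1 - X i ^ 2)) *
      (X (j-1) ^ 2 * (1 - X (j-1) ^ 2)) *
      (-(3 * X j * (1 - X j ^ 2) * (5 * X j ^ 4 - 5 * X j ^ 2 + 1))) * X (j+1) ^ 4 := by
    show ampA n x k6 = _
    rw [ampA_eval n j 3 4 hj1 hj2' x k6 X hX hpat6]
    simp only [Nat.cast_ofNat]
    rw [ampF_13, ampF_34]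
  -- abbreviations
  set C := ∏ i ∈ Finset.range (j-1), (1 - X i ^ 2) with hC_def
  set u := X (j-1) with hu_def
  set t := X j with ht_def
  set w := X (j+1) with hw_def
  -- nonzeroness
  have ha0ne : a0 ≠ 0 := left_ne_zero_of_mul h03
  have ha3ne : a3 ≠ 0 := right_ne_zero_of_mul h03
  have hR0 : C * (1 - u ^ 2) * (1 - t ^ 2) * w ≠ 0 := by rw [← ha0]; exact ha0ne
  have hC : C ≠ 0 :=
    left_ne_zero_of_mul (left_ne_zero_of_mul (left_ne_zero_of_mul hR0))
  have hu2 : (1:ℝ) - u ^ 2 ≠ 0 :=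
    right_ne_zero_of_mul (left_ne_zero_of_mul (left_ne_zero_of_mul hR0))
  have ht2 : (1:ℝ) - t ^ 2 ≠ 0 := right_ne_zero_of_mul (left_ne_zero_of_mul hR0)
  have hw : w ≠ 0 := right_ne_zero_of_mul hR0
  have ht : t ≠ 0 := by
    intro h; apply ha3ne; rw [ha3, h]; ring
  have e1 : 7 * a1 / (5 * a0) = -(7 * u * (1 - 3 * t ^ 2) * w) / 5 := by
    rw [ha1, ha0]; field_simp
  have e5 : 5 * a5 / (4 * a3) = -(5 * u * (1 - 2 * t ^ 2) * w) / 2 := by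
    rw [ha5, ha3]; field_simp; ring
  have hκ : u * w * (8 * t ^ 2 - 11) ≠ 0 := by
    intro h; apply hne
    rw [e1, e5]
    linear_combination (-(1:ℝ)/10) * h
  have hu : u ≠ 0 := fun h => hκ (by rw [h]; ring)
  -- square roots
  have hE1 : 3 * (a1 * a3 * a4) / a0 ^ 3 + (7 * a1 / (5 * a0)) ^ 2 - 9 * a2 / (5 * a0) =
      (u * w * (21 * t ^ 2 - 2) / 5) ^ 2 := by
    rw [ha0, ha1, ha2, ha3, ha4]; field_simp; ring
  have hE2 : 5 * (a4 * a5) / (2 * a0 ^ 2) + (5 * a5 / (4 * a3)) ^ 2 - 4 * a6 / (3 * a3) =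
      (u * w * (10 * t ^ 2 - 3) / 2) ^ 2 := by
    rw [ha0, ha3, ha4, ha5, ha6]; field_simp; ring
  have hA1 : -(7 * a1) / (5 * a0) = u * w * (7 - 21 * t ^ 2) / 5 := by
    rw [ha1, ha0]; field_simp; ring
  have hA2 : -(5 * a5) / (4 * a3) = u * w * (5 - 10 * t ^ 2) / 2 := by
    rw [ha5, ha3]; field_simp; ring
  have hyp : yp = u * w * (7 - 21 * t ^ 2) / 5 + |u * w * (21 * t ^ 2 - 2) / 5| := by
    show -(7 * a1) / (5 * a0) + Real.sqrt _ = _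
    rw [hE1, Real.sqrt_sq_eq_abs, hA1]
  have hym : ym = u * w * (7 - 21 * t ^ 2) / 5 - |u * w * (21 * t ^ 2 - 2) / 5| := by
    show -(7 * a1) / (5 * a0) - Real.sqrt _ = _
    rw [hE1, Real.sqrt_sq_eq_abs, hA1]
  have hYp : Yp = u * w * (5 - 10 * t ^ 2) / 2 + |u * w * (10 * t ^ 2 - 3) / 2| := by
    show -(5 * a5) / (4 * a3) + Real.sqrt _ = _
    rw [hE2, Real.sqrt_sq_eq_abs, hA2]
  have hYm : Ym = u * w * (5 - 10 * t ^ 2) / 2 - |u * w * (10 * t ^ 2 - 3) / 2| := by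
    show -(5 * a5) / (4 * a3) - Real.sqrt _ = _
    rw [hE2, Real.sqrt_sq_eq_abs, hA2]
  have hset1 : ({yp, ym} : Set ℝ) = {u * w, u * w * (9 - 42 * t ^ 2) / 5} := by
    rcases abs_cases (u * w * (21 * t ^ 2 - 2) / 5) with ⟨hab, _⟩ | ⟨hab, _⟩
    · rw [hyp, hym, hab,
        show u * w * (7 - 21 * t ^ 2) / 5 + u * w * (21 * t ^ 2 - 2) / 5 = u * w by ring,
        show u * w * (7 - 21 * t ^ 2) / 5 - u * w * (21 * t ^ 2 - 2) / 5 =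
          u * w * (9 - 42 * t ^ 2) / 5 by ring]
    · rw [hyp, hym, hab,
        show u * w * (7 - 21 * t ^ 2) / 5 + -(u * w * (21 * t ^ 2 - 2) / 5) =
          u * w * (9 - 42 * t ^ 2) / 5 by ring,
        show u * w * (7 - 21 * t ^ 2) / 5 - -(u * w * (21 * t ^ 2 - 2) / 5) = u * w by ring,
        Set.pair_comm]
  have hset2 : ({Yp, Ym} : Set ℝ) = {u * w, u * w * (4 - 10 * t ^ 2)} := by
    rcases abs_cases (u * w * (10 * t ^ 2 - 3) / 2) with ⟨hab, _⟩ | ⟨hab, _⟩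
    · rw [hYp, hYm, hab,
        show u * w * (5 - 10 * t ^ 2) / 2 + u * w * (10 * t ^ 2 - 3) / 2 = u * w by ring,
        show u * w * (5 - 10 * t ^ 2) / 2 - u * w * (10 * t ^ 2 - 3) / 2 =
          u * w * (4 - 10 * t ^ 2) by ring]
    · rw [hYp, hYm, hab,
        show u * w * (5 - 10 * t ^ 2) / 2 + -(u * w * (10 * t ^ 2 - 3) / 2) =
          u * w * (4 - 10 * t ^ 2) by ring,
        show u * w * (5 - 10 * t ^ 2) / 2 - -(u * w * (10 * t ^ 2 - 3) / 2) = u * w by ring,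
        Set.pair_comm]
  have hc12 : u * w * (9 - 42 * t ^ 2) / 5 ≠ u * w * (4 - 10 * t ^ 2) := by
    intro h; apply hκ; linear_combination 5 * h
  refine ⟨u * w, ?_, ?_⟩
  · rw [hset1, hset2]
    ext z
    simp only [Set.mem_inter_iff, Set.mem_insert_iff, Set.mem_singleton_iff]
    constructor
    · rintro ⟨hz1 | hz1, hz2 | hz2⟩
      · exact hz1
      · exact hz1
      · exact hz2
      · exact absurd (hz1.symm.trans hz2) hc12
    · rintro rfl
      exact ⟨Or.inl rfl, Or.inl rfl⟩
  · -- x_j = t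
    have hxj : x ⟨j, by omega⟩ = t := by
      rw [hX]
    rw [hxj]
    have harg : a3 * a4 / (2 * a0 ^ 2 * (u * w)) = t ^ 2 := by
      rw [ha3, ha4, ha0]; field_simp
    rw [harg, Real.sqrt_sq_eq_abs]
    -- positivity
    have hbound : ∀ m : ℕ, m ≤ n → (0:ℝ) ≤ 1 - X m ^ 2 := by
      intro m hm
      have hXm : X m = x ⟨m, by omega⟩ := by rw [hXdef]; exact dif_pos (by omega)
      obtain ⟨hl, hr⟩ := hx ⟨m, by omega⟩
      rw [hXm]; nlinarith
    have hCnn : (0:ℝ) ≤ C := by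
      rw [hC_def]
      apply Finset.prod_nonneg
      intro i hi
      exact hbound i (by have := Finset.mem_range.mp hi; omega)
    have hCpos : 0 < C := by
      rcases lt_or_eq_of_le hCnn with h | h
      · exact h
      · exact absurd h.symm hC
    have hu2pos : 0 < 1 - u ^ 2 := lt_of_le_of_ne (hbound (j-1) (by omega)) (Ne.symm hu2)
    have ht2pos : 0 < 1 - t ^ 2 := lt_of_le_of_ne (hbound j (by omega)) (Ne.symm ht2)
    have hw2pos : 0 < w ^ 2 := by positivity
    have hM : 0 < C * (1 - u ^ 2) * (1 - t ^ 2) * w ^ 2 :=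
      mul_pos (mul_pos (mul_pos hCpos hu2pos) ht2pos) hw2pos
    have ha3' : a3 = -t * (C * (1 - u ^ 2) * (1 - t ^ 2) * w ^ 2) := by rw [ha3]; ring
    have habs : |a3| = |t| * (C * (1 - u ^ 2) * (1 - t ^ 2) * w ^ 2) := by
      rw [ha3', abs_mul, abs_neg, abs_of_pos hM]
    have htabs : |t| ≠ 0 := abs_ne_zero.mpr ht
    rw [habs, ha3']
    field_simp
end
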